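/- Let A be an associative unital ℂ-algebra, m, k ∈ ℂ, and a, b, c, d, f ∈ A. Then the RTT-relation R(G_{m,k}) * T₁ * T₂ = T₂ * T₁ * R(G_{m,k}) holds (as an equality of matrices over A indexed by (Fin 3 × Fin 3)) if and only if the following relations hold, where δ = a·d − b·c + m·a·c: cd − dc = −m·c², cb − bc = −m·(ac + cd), ca − ac = −m·c², da − ad = −m·(d − a)·c, db − bd = −m·(d² − δ), ba − ab = −m·(δ − a²), fa − af = k·c·f, fb − bf = k·(d·f − f·a), fc = cf, fd − df = −k·c·f. -/
import Mathlib


noncomputable section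

open Matrix

/-- The Jordanian `R`-matrix `R(G_{m,k})`, indexed by `Fin 3 × Fin 3`
(indices `0,1,2` correspond to the paper's `1,2,3`). -/
def Rgmk (m k : ℂ) : Matrix (Fin 3 × Fin 3) (Fin 3 × Fin 3) ℂ :=
  fun p q =>
    if p = q then 1
    else if p = (0, 0) ∧ q = (0, 1) then -m
    else if p = (0, 0) ∧ q = (1, 0) then m
    else if p = (0, 0) ∧ q = (1, 1) then m ^ 2
    else if p = (0, 1) ∧ q = (1, 1) then -m
    else if p = (1, 0) ∧ q = (1, 1) then m
    else if p = (0, 2) ∧ q = (1, 2) then k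
    else if p = (2, 0) ∧ q = (2, 1) then -k
    else 0

/-- The matrix of generators `T` of `G_{m,k}`. -/
def Tmat {A : Type*} [Ring A] (a b c d f : A) : Matrix (Fin 3) (Fin 3) A :=
  !![a, b, 0; c, d, 0; 0, 0, f]

/-- `T₁ = T ⊗ 1`. -/
def T1 {A : Type*} [Ring A] (T : Matrix (Fin 3) (Fin 3) A) :
    Matrix (Fin 3 × Fin 3) (Fin 3 × Fin 3) A :=
  fun p q => if p.2 = q.2 then T p.1 q.1 else 0

/-- `T₂ = 1 ⊗ T`. -/
def T2 {A : Type*} [Ring A] (T : Matrix (Fin 3) (Fin 3) A) :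
    Matrix (Fin 3 × Fin 3) (Fin 3 × Fin 3) A :=
  fun p q => if p.1 = q.1 then T p.2 q.2 else 0

set_option maxHeartbeats 4000000 in
/-- the `RTT`-relations for `R(G_{m,k})` hold iff the generators satisfy
the defining commutation relations of the Jordanian quantum group `G_{m,k}`. -/
theorem Gmk_RTT_iff_relations (A : Type*) [Ring A] [Algebra ℂ A]
    (m k : ℂ) (a b c d f : A) :
    ((Rgmk m k).map (algebraMap ℂ A) * T1 (Tmat a b c d f) * T2 (Tmat a b c d f) =
        T2 (Tmat a b c d f) * T1 (Tmat a b c d f) * (Rgmk m k).map (algebraMap ℂ A)) ↔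
      (c * d - d * c = (-m) • (c * c) ∧
       c * b - b * c = (-m) • (a * c + c * d) ∧
       c * a - a * c = (-m) • (c * c) ∧
       d * a - a * d = (-m) • ((d - a) * c) ∧
       d * b - b * d = (-m) • (d * d - (a * d - b * c + m • (a * c))) ∧
       b * a - a * b = (-m) • ((a * d - b * c + m • (a * c)) - a * a) ∧
       f * a - a * f = k • (c * f) ∧
       f * b - b * f = k • (d * f - f * a) ∧
       f * c = c * f ∧
       f * d - d * f = (-k) • (c * f)) := by
  constructor
  · intro h
    have H := Matrix.ext_iff.2 h
    have E1 := H (1,1) (0,1)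
    have E2 := H (1,0) (0,1)
    have E3 := H (1,0) (0,0)
    have E4 := H (1,0) (1,0)
    have E5 := H (1,0) (1,1)
    have E6 := H (0,0) (1,0)
    have E7 := H (0,2) (0,2)
    have E8 := H (0,2) (1,2)
    have E9 := H (1,2) (0,2)
    have E10 := H (2,1) (2,1)
    simp [Matrix.mul_apply, Fintype.sum_prod_type, Fin.sum_univ_three, Rgmk, T1, T2, Tmat,
      Matrix.map_apply, Prod.ext_iff, Algebra.algebraMap_eq_smul_one, mul_smul_comm,
      smul_mul_assoc] at E1 E2 E3 E4 E5 E6 E7 E8 E9 E10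
    have R4 : d * a - a * d = (-m) • ((d - a) * c) := by
      linear_combination (norm := ((try simp only [sub_mul, mul_sub, add_mul, mul_add, neg_mul, mul_neg, smul_mul_assoc, mul_smul_comm, smul_sub, smul_add, smul_smul, neg_smul, smul_neg]); module)) E4
    refine ⟨?_, ?_, ?_, R4, ?_, ?_, ?_, ?_, ?_, ?_⟩
    · linear_combination (norm := ((try simp only [sub_mul, mul_sub, add_mul, mul_add, neg_mul, mul_neg, smul_mul_assoc, mul_smul_comm, smul_sub, smul_add, smul_smul, neg_smul, smul_neg]); module)) E1
    · linear_combination (norm := ((try simp only [sub_mul, mul_sub, add_mul, mul_add, neg_mul, mul_neg, smul_mul_assoc, mul_smul_comm, smul_sub, smul_add, smul_smul, neg_smul, smul_neg]); module)) E2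
    · linear_combination (norm := ((try simp only [sub_mul, mul_sub, add_mul, mul_add, neg_mul, mul_neg, smul_mul_assoc, mul_smul_comm, smul_sub, smul_add, smul_smul, neg_smul, smul_neg]); module)) E3
    · linear_combination (norm := ((try simp only [sub_mul, mul_sub, add_mul, mul_add, neg_mul, mul_neg, smul_mul_assoc, mul_smul_comm, smul_sub, smul_add, smul_smul, neg_smul, smul_neg]); module)) E5
    · linear_combination (norm := ((try simp only [sub_mul, mul_sub, add_mul, mul_add, neg_mul, mul_neg, smul_mul_assoc, mul_smul_comm, smul_sub, smul_add, smul_smul, neg_smul, smul_neg]); module)) E6 - m • R4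
    · linear_combination (norm := ((try simp only [sub_mul, mul_sub, add_mul, mul_add, neg_mul, mul_neg, smul_mul_assoc, mul_smul_comm, smul_sub, smul_add, smul_smul, neg_smul, smul_neg]); module)) -E7
    · linear_combination (norm := ((try simp only [sub_mul, mul_sub, add_mul, mul_add, neg_mul, mul_neg, smul_mul_assoc, mul_smul_comm, smul_sub, smul_add, smul_smul, neg_smul, smul_neg]); module)) -E8
    · linear_combination (norm := ((try simp only [sub_mul, mul_sub, add_mul, mul_add, neg_mul, mul_neg, smul_mul_assoc, mul_smul_comm, smul_sub, smul_add, smul_smul, neg_smul, smul_neg]); module)) -E9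
    · linear_combination (norm := ((try simp only [sub_mul, mul_sub, add_mul, mul_add, neg_mul, mul_neg, smul_mul_assoc, mul_smul_comm, smul_sub, smul_add, smul_smul, neg_smul, smul_neg]); module)) E10
  · rintro ⟨h1, h2, h3, h4, h5, h6, h7, h8, h9, h10⟩
    ext ⟨i, j⟩ ⟨p, q⟩
    fin_cases i <;> fin_cases j <;> fin_cases p <;> fin_cases q <;>
      simp [Matrix.mul_apply, Fintype.sum_prod_type, Fin.sum_univ_three, Rgmk, T1, T2, Tmat,
        Matrix.map_apply, Prod.ext_iff, Algebra.algebraMap_eq_smul_one, mul_smul_comm,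
        smul_mul_assoc]
    · linear_combination (norm := ((try simp only [sub_mul, mul_sub, add_mul, mul_add, neg_mul, mul_neg, smul_mul_assoc, mul_smul_comm, smul_sub, smul_add, smul_smul, neg_smul, smul_neg]); module)) m • h3
    · linear_combination (norm := ((try simp only [sub_mul, mul_sub, add_mul, mul_add, neg_mul, mul_neg, smul_mul_assoc, mul_smul_comm, smul_sub, smul_add, smul_smul, neg_smul, smul_neg]); module)) m • h2 - h6
    · linear_combination (norm := ((try simp only [sub_mul, mul_sub, add_mul, mul_add, neg_mul, mul_neg, smul_mul_assoc, mul_smul_comm, smul_sub, smul_add, smul_smul, neg_smul, smul_neg]); module)) h6 + m • h4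
    · linear_combination (norm := ((try simp only [sub_mul, mul_sub, add_mul, mul_add, neg_mul, mul_neg, smul_mul_assoc, mul_smul_comm, smul_sub, smul_add, smul_smul, neg_smul, smul_neg]); module)) m • h5 + m • h6
    · linear_combination (norm := ((try simp only [sub_mul, mul_sub, add_mul, mul_add, neg_mul, mul_neg, smul_mul_assoc, mul_smul_comm, smul_sub, smul_add, smul_smul, neg_smul, smul_neg]); module)) -h3
    · linear_combination (norm := ((try simp only [sub_mul, mul_sub, add_mul, mul_add, neg_mul, mul_neg, smul_mul_assoc, mul_smul_comm, smul_sub, smul_add, smul_smul, neg_smul, smul_neg]); module)) -h4 - m • h1 + m • h3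
    · linear_combination (norm := ((try simp only [sub_mul, mul_sub, add_mul, mul_add, neg_mul, mul_neg, smul_mul_assoc, mul_smul_comm, smul_sub, smul_add, smul_smul, neg_smul, smul_neg]); module)) -h2 + m • h1 - m • h3
    · linear_combination (norm := ((try simp only [sub_mul, mul_sub, add_mul, mul_add, neg_mul, mul_neg, smul_mul_assoc, mul_smul_comm, smul_sub, smul_add, smul_smul, neg_smul, smul_neg]); module)) -h5 + m • h4 - m • h2 + (m^2) • h1 - (m^2) • h3
    · linear_combination (norm := ((try simp only [sub_mul, mul_sub, add_mul, mul_add, neg_mul, mul_neg, smul_mul_assoc, mul_smul_comm, smul_sub, smul_add, smul_smul, neg_smul, smul_neg]); module)) -h7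
    · linear_combination (norm := ((try simp only [sub_mul, mul_sub, add_mul, mul_add, neg_mul, mul_neg, smul_mul_assoc, mul_smul_comm, smul_sub, smul_add, smul_smul, neg_smul, smul_neg]); module)) -h8
    · linear_combination (norm := ((try simp only [sub_mul, mul_sub, add_mul, mul_add, neg_mul, mul_neg, smul_mul_assoc, mul_smul_comm, smul_sub, smul_add, smul_smul, neg_smul, smul_neg]); module)) h3
    · linear_combination (norm := ((try simp only [sub_mul, mul_sub, add_mul, mul_add, neg_mul, mul_neg, smul_mul_assoc, mul_smul_comm, smul_sub, smul_add, smul_smul, neg_smul, smul_neg]); module)) h2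
    · linear_combination (norm := ((try simp only [sub_mul, mul_sub, add_mul, mul_add, neg_mul, mul_neg, smul_mul_assoc, mul_smul_comm, smul_sub, smul_add, smul_smul, neg_smul, smul_neg]); module)) h4
    · linear_combination (norm := ((try simp only [sub_mul, mul_sub, add_mul, mul_add, neg_mul, mul_neg, smul_mul_assoc, mul_smul_comm, smul_sub, smul_add, smul_smul, neg_smul, smul_neg]); module)) h5
    · linear_combination (norm := ((try simp only [sub_mul, mul_sub, add_mul, mul_add, neg_mul, mul_neg, smul_mul_assoc, mul_smul_comm, smul_sub, smul_add, smul_smul, neg_smul, smul_neg]); module)) h1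
    · linear_combination (norm := ((try simp only [sub_mul, mul_sub, add_mul, mul_add, neg_mul, mul_neg, smul_mul_assoc, mul_smul_comm, smul_sub, smul_add, smul_smul, neg_smul, smul_neg]); module)) -h1
    · linear_combination (norm := ((try simp only [sub_mul, mul_sub, add_mul, mul_add, neg_mul, mul_neg, smul_mul_assoc, mul_smul_comm, smul_sub, smul_add, smul_smul, neg_smul, smul_neg]); module)) (-m) • h1
    · linear_combination (norm := ((try simp only [sub_mul, mul_sub, add_mul, mul_add, neg_mul, mul_neg, smul_mul_assoc, mul_smul_comm, smul_sub, smul_add, smul_smul, neg_smul, smul_neg]); module)) -h9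
    · linear_combination (norm := ((try simp only [sub_mul, mul_sub, add_mul, mul_add, neg_mul, mul_neg, smul_mul_assoc, mul_smul_comm, smul_sub, smul_add, smul_smul, neg_smul, smul_neg]); module)) -h10 - k • h9
    · linear_combination (norm := ((try simp only [sub_mul, mul_sub, add_mul, mul_add, neg_mul, mul_neg, smul_mul_assoc, mul_smul_comm, smul_sub, smul_add, smul_smul, neg_smul, smul_neg]); module)) h7 - k • h9
    · linear_combination (norm := ((try simp only [sub_mul, mul_sub, add_mul, mul_add, neg_mul, mul_neg, smul_mul_assoc, mul_smul_comm, smul_sub, smul_add, smul_smul, neg_smul, smul_neg]); module)) h8 - k • h10 - k • h7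
    · linear_combination (norm := ((try simp only [sub_mul, mul_sub, add_mul, mul_add, neg_mul, mul_neg, smul_mul_assoc, mul_smul_comm, smul_sub, smul_add, smul_smul, neg_smul, smul_neg]); module)) h9
    · linear_combination (norm := ((try simp only [sub_mul, mul_sub, add_mul, mul_add, neg_mul, mul_neg, smul_mul_assoc, mul_smul_comm, smul_sub, smul_add, smul_smul, neg_smul, smul_neg]); module)) h10
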